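/- Let K ⊂ ℝ^d be a compact convex set with nonempty interior, B > 0, η ≥ 0, γ ∈ (0, 1), and T ≥ 1 an integer. Let F : ℝ^d → ℝ be convex on K with |F(x)| ≤ B for all x ∈ K. Let x¹, …, x^T ∈ ℝ^d and g¹, g̃¹, …, g^T, g̃^T ∈ ℝ^d, and define G⁰ = K and G^t = G^{t−1} ∩ { y ∈ ℝ^d : ⟨g̃^t, y − x^t⟩ ≤ 0 } for t = 1, …, T. Suppose that for every t ∈ [T]: (i) x^t ∈ G^{t−1}; (ii) g^t is a subgradient of F at x^t over K, i.e. F(y) ≥ F(x^t) + ⟨g^t, y − x^t⟩ for all y ∈ K; (iii) |⟨g̃^t − g^t, y − x^t⟩| ≤ η for all y ∈ G^{t−1}; and (iv) vol(G^t) ≤ γ·vol(G^{t−1}), where vol denotes Lebesgue measure on ℝ^d. Then for every x ∈ K: min_{t ∈ [T]} F(x^t) ≤ F(x) + γ^{T/d}·2B + η. -/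

import Mathlib

open MeasureTheory
open scoped RealInnerProductSpace

/-- Guarantee of the approximate center-of-gravity cutting-plane method with inexact
gradients (indices shifted so that `x t`, `g t`, `gt t` for `t = 0, …, T-1` play the
roles of `x^{t+1}`, `g^{t+1}`, `g̃^{t+1}`). -/
theorem stmt_10 (d : ℕ) (hd : 1 ≤ d) (K : Set (EuclideanSpace ℝ (Fin d)))
    (hKcompact : IsCompact K) (hKconv : Convex ℝ K) (hKint : (interior K).Nonempty)
    (B η γ : ℝ) (hB : 0 < B) (hη : 0 ≤ η) (hγ0 : 0 < γ) (hγ1 : γ < 1)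
    (T : ℕ) (hT : 1 ≤ T)
    (F : EuclideanSpace ℝ (Fin d) → ℝ) (hFconv : ConvexOn ℝ K F)
    (hFbound : ∀ x ∈ K, |F x| ≤ B)
    (x g gt : ℕ → EuclideanSpace ℝ (Fin d))
    (G : ℕ → Set (EuclideanSpace ℝ (Fin d)))
    (hG0 : G 0 = K)
    (hGsucc : ∀ t < T, G (t + 1) = G t ∩ {y | ⟪gt t, y - x t⟫ ≤ 0})
    (hxG : ∀ t < T, x t ∈ G t)
    (hsub : ∀ t < T, ∀ y ∈ K, F y ≥ F (x t) + ⟪g t, y - x t⟫)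
    (happrox : ∀ t < T, ∀ y ∈ G t, |⟪gt t - g t, y - x t⟫| ≤ η)
    (hvol : ∀ t < T, volume (G (t + 1)) ≤ ENNReal.ofReal γ * volume (G t)) :
    ∀ x' ∈ K, ∃ t < T, F (x t) ≤ F x' + γ ^ ((T : ℝ) / (d : ℝ)) * (2 * B) + η := by
  intro x' hx'
  set e0 : ℝ := γ ^ ((T : ℝ) / (d : ℝ)) with he0
  have hd0 : (0 : ℝ) < (d : ℝ) := by exact_mod_cast hd
  have hT0 : (0 : ℝ) < (T : ℝ) := by exact_mod_cast hT
  have he0pos : 0 < e0 := Real.rpow_pos_of_pos hγ0 _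
  have he0lt1 : e0 < 1 :=
    Real.rpow_lt_one hγ0.le hγ1 (by positivity)
  -- e0 ^ d = γ ^ T
  have he0d : e0 ^ d = γ ^ T := by
    rw [he0, ← Real.rpow_natCast (γ ^ ((T : ℝ) / (d : ℝ))) d,
      ← Real.rpow_mul hγ0.le, div_mul_cancel₀ _ (ne_of_gt hd0),
      Real.rpow_natCast]
  -- volume bounds for K
  have hKmeas0 : 0 < volume K := by
    obtain ⟨p, hp⟩ := hKint
    have : 0 < volume (interior K) :=
      (isOpen_interior.measure_pos volume ⟨p, hp⟩)
    exact this.trans_le (measure_mono interior_subset)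
  have hKmeasT : volume K < ⊤ := hKcompact.measure_lt_top
  -- volume (G T) ≤ γ^T * volume K
  have hvolG : ∀ t ≤ T, volume (G t) ≤ ENNReal.ofReal γ ^ t * volume K := by
    intro t
    induction t with
    | zero => intro _; simp [hG0]
    | succ n ih =>
      intro hn
      have hnT : n < T := hn
      calc volume (G (n + 1)) ≤ ENNReal.ofReal γ * volume (G n) := hvol n hnT
        _ ≤ ENNReal.ofReal γ * (ENNReal.ofReal γ ^ n * volume K) := by
            exact mul_le_mul_right (ih hnT.le) _
        _ = ENNReal.ofReal γ ^ (n + 1) * volume K := by ring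
  -- key step: for every ε ∈ (e0, 1) there is a good t
  have key : ∀ ε : ℝ, e0 < ε → ε < 1 → ∃ t < T, F (x t) ≤ F x' + ε * (2 * B) + η := by
    intro ε hε0 hε1
    have hεpos : 0 < ε := he0pos.trans hε0
    -- the shrunk set
    set Kε : Set (EuclideanSpace ℝ (Fin d)) := AffineMap.homothety x' ε '' K with hKε
    have hvolKε : volume Kε = ENNReal.ofReal (ε ^ d) * volume K := by
      rw [hKε, Measure.addHaar_image_homothety]
      congr 2
      rw [abs_of_nonneg (by positivity)]
      congr 1
      simp [finrank_euclideanSpace]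
    -- strict volume comparison : volume (G T) < volume Kε
    have hlt : volume (G T) < volume Kε := by
      have h1 : volume (G T) ≤ ENNReal.ofReal (γ ^ T) * volume K := by
        have := hvolG T le_rfl
        rwa [← ENNReal.ofReal_pow hγ0.le] at this
      have h2 : ENNReal.ofReal (γ ^ T) * volume K < ENNReal.ofReal (ε ^ d) * volume K := by
        apply ENNReal.mul_lt_mul_left (ne_of_gt hKmeas0) (ne_of_lt hKmeasT)
        apply ENNReal.ofReal_lt_ofReal_iff_of_nonneg (by positivity) |>.mpr
        rw [← he0d]
        exact pow_lt_pow_left₀ hε0 he0pos.le (by omega)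
      exact lt_of_le_of_lt h1 (by rwa [hvolKε])
    -- hence Kε is not contained in G T
    have hnsub : ¬ Kε ⊆ G T := fun h => absurd (measure_mono h) (not_le.mpr hlt)
    rw [Set.not_subset] at hnsub
    obtain ⟨z, hzKε, hzGT⟩ := hnsub
    obtain ⟨y, hyK, hyz⟩ := hzKε
    have hz_def : z = (1 - ε) • x' + ε • y := by
      rw [← hyz, AffineMap.homothety_apply]
      simp only [vsub_eq_sub, vadd_eq_add]
      module
    have hzK : z ∈ K := by
      rw [hz_def]
      exact hKconv hx' hyK (by linarith) hεpos.le (by ring)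
    -- find the cutting step
    have hfind : ∀ n ≤ T, z ∉ G n → ∃ t < n, z ∈ G t ∧ z ∉ G (t + 1) := by
      intro n
      induction n with
      | zero => intro _ hz; exact absurd (hG0 ▸ hzK) hz
      | succ m ih =>
        intro hm hz
        by_cases hzm : z ∈ G m
        · exact ⟨m, Nat.lt_succ_self m, hzm, hz⟩
        · obtain ⟨t, ht, h1, h2⟩ := ih (by omega) hzm
          exact ⟨t, by omega, h1, h2⟩
    obtain ⟨t, htT, hzGt, hzGt1⟩ := hfind T le_rfl hzGT
    refine ⟨t, htT, ?_⟩
    -- the cut is violated by z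
    have hcut : 0 < ⟪gt t, z - x t⟫ := by
      by_contra h
      exact hzGt1 ((hGsucc t htT) ▸ ⟨hzGt, not_lt.mp h⟩)
    have hsub' := hsub t htT z hzK
    have happ := happrox t htT z hzGt
    have hinner : ⟪gt t - g t, z - x t⟫ = ⟪gt t, z - x t⟫ - ⟪g t, z - x t⟫ :=
      inner_sub_left _ _ _
    have habs : ⟪gt t, z - x t⟫ - ⟪g t, z - x t⟫ ≤ η := by
      rw [← hinner]; exact (abs_le.mp happ).2
    have h1 : F (x t) ≤ F z + η := by nlinarith
    -- convexity bound on F z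
    have hconv := hFconv.2 hx' hyK (by linarith : (0:ℝ) ≤ 1 - ε) hεpos.le (by ring)
    rw [← hz_def] at hconv
    simp only [smul_eq_mul] at hconv
    have hFy := abs_le.mp (hFbound y hyK)
    have hFx' := abs_le.mp (hFbound x' hx')
    nlinarith [mul_le_mul_of_nonneg_left hFy.2 hεpos.le, mul_le_mul_of_nonneg_left hFx'.1 hεpos.le]
  -- take the minimizer over t < T
  obtain ⟨t0, ht0, hmin⟩ := (Finset.range T).exists_min_image (fun t => F (x t))
    ⟨0, Finset.mem_range.mpr (by omega)⟩
  rw [Finset.mem_range] at ht0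
  refine ⟨t0, ht0, ?_⟩
  by_contra hcon
  push_neg at hcon
  have hgap : 0 < F (x t0) - (F x' + e0 * (2 * B) + η) := by linarith
  set gap : ℝ := F (x t0) - (F x' + e0 * (2 * B) + η) with hgapdef
  set ε : ℝ := min ((e0 + 1) / 2) (e0 + gap / (4 * B)) with hεdef
  have hε0 : e0 < ε := by
    apply lt_min (by linarith)
    have : 0 < gap / (4 * B) := by positivity
    linarith
  have hε1 : ε < 1 := lt_of_le_of_lt (min_le_left _ _) (by linarith)
  obtain ⟨t, htT, hle⟩ := key ε hε0 hε1
  have hmin' := hmin t (Finset.mem_range.mpr htT)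
  have hεle : ε ≤ e0 + gap / (4 * B) := min_le_right _ _
  have h2B : (0:ℝ) < 2 * B := by linarith
  have hmul : ε * (2 * B) ≤ e0 * (2 * B) + gap / 2 := by
    have h := mul_le_mul_of_nonneg_right hεle h2B.le
    have h2 : gap / (4 * B) * (2 * B) = gap / 2 := by
      field_simp; ring
    rw [add_mul, h2] at h
    linarith
  linarith
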